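/- Let (f,g) be an admissible breadth-first pair such that f(x) + g(t) > 0 for all x,t ≥ 0 (e.g., if f + g(0) is strictly positive pointwise). Then the initial value problem c'₊ = f∘c + g, c(0)=0 has at most one solution. -/

import Mathlib

open Set MeasureTheory Filter

/-- Right-continuity at every point of `[0,∞)`. -/
def RightCont (f : ℝ → ℝ) : Prop := ∀ t ≥ (0:ℝ), ContinuousWithinAt f (Ici t) t

/-- `fm` is the left-limit function of `f` on `(0,∞)`. -/
def LeftLimAt (f fm : ℝ → ℝ) : Prop :=
  ∀ t > (0:ℝ), Tendsto f (nhdsWithin t (Iio t)) (nhds (fm t))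

/-- An admissible breadth-first pair `(f,g)` (with left-limit functions `fm`, `gm`):
`f`, `g` are càdlàg on `[0,∞)`, `f` has no negative jumps, `g` is non-decreasing,
and `f(0) + g(0) ≥ 0`. -/
def AdmissiblePair (f fm g gm : ℝ → ℝ) : Prop :=
  RightCont f ∧ LeftLimAt f fm ∧ (∀ t > (0:ℝ), fm t ≤ f t) ∧
  RightCont g ∧ LeftLimAt g gm ∧ (∀ s t, (0:ℝ) ≤ s → s ≤ t → g s ≤ g t) ∧
  0 ≤ f 0 + g 0

open Topology

section Aux

variable {f g c : ℝ → ℝ}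

lemma sol_nonneg (hpos : ∀ x ≥ (0:ℝ), ∀ t ≥ (0:ℝ), 0 < f x + g t)
    (hc_cont : ContinuousOn c (Ici 0)) (hc0 : c 0 = 0)
    (hc_deriv : ∀ t ≥ (0:ℝ), HasDerivWithinAt c (f (c t) + g t) (Ici t) t) :
    ∀ t ≥ (0:ℝ), 0 ≤ c t := by
  intro T hT
  have key : Icc (0:ℝ) T ⊆ {t | 0 ≤ c t} := by
    apply IsClosed.Icc_subset_of_forall_exists_gt
    · have : {t | (0:ℝ) ≤ c t} ∩ Icc 0 T = Icc 0 T ∩ c ⁻¹' (Ici 0) := by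
        rw [inter_comm]; rfl
      rw [this]
      exact (hc_cont.mono Icc_subset_Ici_self).preimage_isClosed_of_isClosed
        isClosed_Icc isClosed_Ici
    · simp [hc0]
    · rintro x ⟨hx0, hxT⟩ y hy
      have hx0' : (0:ℝ) ≤ x := hxT.1
      have dpos : 0 < f (c x) + g x := hpos _ hx0 _ hx0'
      have hslope : Tendsto (slope c x) (𝓝[>] x) (𝓝 (f (c x) + g x)) := by
        rw [← hasDerivWithinAt_iff_tendsto_slope' (notMem_Ioi.2 le_rfl)]
        exact (hc_deriv x hx0').Ioi_of_Ici
      have hev : ∀ᶠ z in 𝓝[>] x, 0 < slope c x z := hslope (Ioi_mem_nhds dpos)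
      have hmem : Ioc x y ∈ 𝓝[>] x := Ioc_mem_nhdsGT hy
      obtain ⟨z, hz1, hz2⟩ := (hev.and (eventually_of_mem hmem fun z hz => hz)).exists
      refine ⟨z, ?_, hz2⟩
      have hzx : 0 < z - x := sub_pos.2 hz2.1
      rw [slope_def_field] at hz1
      have hcz : 0 < c z - c x := by
        have := mul_pos hz1 hzx
        rwa [div_mul_cancel₀ _ hzx.ne'] at this
      have hx0'' : (0:ℝ) ≤ c x := hx0
      show (0:ℝ) ≤ c z
      linarith
  exact key ⟨hT, le_rfl⟩

lemma sol_mono (hpos : ∀ x ≥ (0:ℝ), ∀ t ≥ (0:ℝ), 0 < f x + g t)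
    (hc_cont : ContinuousOn c (Ici 0)) (hc0 : c 0 = 0)
    (hc_deriv : ∀ t ≥ (0:ℝ), HasDerivWithinAt c (f (c t) + g t) (Ici t) t) :
    ∀ s t : ℝ, 0 ≤ s → s ≤ t → c s ≤ c t := by
  intro s t hs hst
  have h := image_le_of_deriv_right_lt_deriv_boundary' (a := s) (b := t)
    (f := fun _ => c s) (f' := fun _ => 0) (B := c) (B' := fun z => f (c z) + g z)
    continuousOn_const (fun x _ => hasDerivWithinAt_const x _ (c s))
    le_rfl (hc_cont.mono fun z hz => hs.trans hz.1)
    (fun x hx => hc_deriv x (hs.trans hx.1))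
    (fun x hx _ => hpos _ (sol_nonneg hpos hc_cont hc0 hc_deriv x (hs.trans hx.1)) _
      (hs.trans hx.1))
  exact h (right_mem_Icc.2 hst)

lemma sol_lt (hpos : ∀ x ≥ (0:ℝ), ∀ t ≥ (0:ℝ), 0 < f x + g t)
    (hc_cont : ContinuousOn c (Ici 0)) (hc0 : c 0 = 0)
    (hc_deriv : ∀ t ≥ (0:ℝ), HasDerivWithinAt c (f (c t) + g t) (Ici t) t) :
    ∀ s t : ℝ, 0 ≤ s → s < t → c s < c t := by
  intro s t hs hst
  have dpos : 0 < f (c s) + g s :=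
    hpos _ (sol_nonneg hpos hc_cont hc0 hc_deriv s hs) _ hs
  have hslope : Tendsto (slope c s) (𝓝[>] s) (𝓝 (f (c s) + g s)) := by
    rw [← hasDerivWithinAt_iff_tendsto_slope' (notMem_Ioi.2 le_rfl)]
    exact (hc_deriv s hs).Ioi_of_Ici
  have hev : ∀ᶠ z in 𝓝[>] s, 0 < slope c s z := hslope (Ioi_mem_nhds dpos)
  have hmem : Ioc s t ∈ 𝓝[>] s := Ioc_mem_nhdsGT hst
  obtain ⟨z, hz1, hz2⟩ := (hev.and (eventually_of_mem hmem fun z hz => hz)).exists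
  have hzx : 0 < z - s := sub_pos.2 hz2.1
  rw [slope_def_field] at hz1
  have hcz : 0 < c z - c s := by
    have := mul_pos hz1 hzx
    rwa [div_mul_cancel₀ _ hzx.ne'] at this
  have := sol_mono hpos hc_cont hc0 hc_deriv z t (hs.trans hz2.1.le) hz2.2
  linarith

lemma exists_inverse (hpos : ∀ x ≥ (0:ℝ), ∀ t ≥ (0:ℝ), 0 < f x + g t)
    (hc_cont : ContinuousOn c (Ici 0)) (hc0 : c 0 = 0)
    (hc_deriv : ∀ t ≥ (0:ℝ), HasDerivWithinAt c (f (c t) + g t) (Ici t) t)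
    {T : ℝ} (hT : 0 < T) :
    ∃ a : ℝ → ℝ,
      (∀ x ∈ Icc 0 (c T), a x ∈ Icc 0 T) ∧
      (∀ x ∈ Icc 0 (c T), c (a x) = x) ∧
      (∀ t ∈ Icc 0 T, a (c t) = t) ∧
      StrictMonoOn a (Icc 0 (c T)) ∧
      ContinuousOn a (Icc 0 (c T)) ∧
      (∀ x ∈ Ico 0 (c T), HasDerivWithinAt a ((f x + g (a x))⁻¹) (Ici x) x) := by
  have hnn := sol_nonneg hpos hc_cont hc0 hc_deriv
  have hmono := sol_mono hpos hc_cont hc0 hc_deriv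
  have hlt := sol_lt hpos hc_cont hc0 hc_deriv
  have hcT : 0 < c T := hc0 ▸ hlt 0 T le_rfl hT
  have hsm : StrictMonoOn c (Icc 0 T) := fun u hu v _ huv => hlt u v hu.1 huv
  have hinj : InjOn c (Icc 0 T) := hsm.injOn
  have hex : ∀ x ∈ Icc 0 (c T), ∃ t ∈ Icc 0 T, c t = x := by
    intro x hx
    have h2 := intermediate_value_Icc hT.le (hc_cont.mono fun z hz => hz.1)
    rw [hc0] at h2
    exact h2 hx
  choose! a ha1 ha2 using hex
  have hctmem : ∀ t ∈ Icc (0:ℝ) T, c t ∈ Icc 0 (c T) :=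
    fun t ht => ⟨hnn t ht.1, hmono t T ht.1 ht.2⟩
  have hleft : ∀ t ∈ Icc (0:ℝ) T, a (c t) = t :=
    fun t ht => hinj (ha1 _ (hctmem t ht)) ht (ha2 _ (hctmem t ht))
  have hasm : StrictMonoOn a (Icc 0 (c T)) := by
    intro x hx y hy hxy
    by_contra h
    push_neg at h
    have h2 := hmono (a y) (a x) (ha1 y hy).1 h
    rw [ha2 x hx, ha2 y hy] at h2
    exact absurd h2 (not_le.2 hxy)
  have haxlt : ∀ x ∈ Icc 0 (c T), x < c T → a x < T := by
    intro x hx hxT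
    rcases lt_or_eq_of_le (ha1 x hx).2 with h | h
    · exact h
    · exfalso; rw [← ha2 x hx, h] at hxT; exact lt_irrefl _ hxT
  have hax0 : ∀ x ∈ Icc 0 (c T), 0 < x → 0 < a x := by
    intro x hx hx0
    rcases lt_or_eq_of_le (ha1 x hx).1 with h | h
    · exact h
    · exfalso; rw [← ha2 x hx, ← h, hc0] at hx0; exact lt_irrefl _ hx0
  have himg : Icc 0 T ⊆ a '' Icc 0 (c T) :=
    fun t ht => ⟨c t, hctmem t ht, hleft t ht⟩
  have hright : ∀ x ∈ Icc 0 (c T), x < c T → ContinuousWithinAt a (Ici x) x := by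
    intro x hx hxT
    apply hasm.continuousWithinAt_right_of_image_mem_nhdsWithin
      (Icc_mem_nhdsGE_of_mem ⟨hx.1, hxT⟩)
    exact mem_of_superset
      (Icc_mem_nhdsGE_of_mem ⟨(ha1 x hx).1, haxlt x hx hxT⟩)
      (fun z hz => himg hz)
  have hleftc : ∀ x ∈ Icc 0 (c T), 0 < x → ContinuousWithinAt a (Iic x) x := by
    intro x hx hx0
    apply hasm.continuousWithinAt_left_of_image_mem_nhdsWithin
      (Icc_mem_nhdsLE_of_mem ⟨hx0, hx.2⟩)
    exact mem_of_superset
      (Icc_mem_nhdsLE_of_mem ⟨hax0 x hx hx0, (ha1 x hx).2⟩)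
      (fun z hz => himg hz)
  have hacont : ContinuousOn a (Icc 0 (c T)) := by
    intro x hx
    rcases eq_or_lt_of_le hx.1 with h0 | h0
    · exact (hright x hx (h0 ▸ hcT)).mono fun z hz => h0 ▸ hz.1
    rcases eq_or_lt_of_le hx.2 with hA | hA
    · exact (hleftc x hx h0).mono fun z hz => hA ▸ hz.2
    · have h2 := (hleftc x hx h0).union (hright x hx hA)
      rw [Iic_union_Ici, continuousWithinAt_univ] at h2
      exact h2.continuousWithinAt
  refine ⟨a, ha1, ha2, hleft, hasm, hacont, ?_⟩
  intro x hx
  have hxmem : x ∈ Icc 0 (c T) := ⟨hx.1, hx.2.le⟩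
  have hat : a x ∈ Icc 0 T := ha1 x hxmem
  have hcat : c (a x) = x := ha2 x hxmem
  have dpos : 0 < f x + g (a x) := hpos x hx.1 (a x) hat.1
  rw [← hasDerivWithinAt_Ioi_iff_Ici,
    hasDerivWithinAt_iff_tendsto_slope' (notMem_Ioi.2 le_rfl),
    ← nhdsWithin_Ioc_eq_nhdsGT hx.2]
  have hsub2 : Ioc x (c T) ⊆ Icc 0 (c T) := fun z hz => ⟨hx.1.trans hz.1.le, hz.2⟩
  have Tcont : Tendsto a (𝓝[Ioc x (c T)] x) (𝓝 (a x)) :=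
    (hacont x hxmem).mono_left (nhdsWithin_mono x hsub2)
  have Tmem : ∀ᶠ z in 𝓝[Ioc x (c T)] x, a z ∈ Ioi (a x) := by
    filter_upwards [self_mem_nhdsWithin] with z hz
    exact hasm hxmem (hsub2 hz) hz.1
  have T1 : Tendsto a (𝓝[Ioc x (c T)] x) (𝓝[>] (a x)) :=
    tendsto_nhdsWithin_iff.2 ⟨Tcont, Tmem⟩
  have T2 : Tendsto (slope c (a x)) (𝓝[>] (a x)) (𝓝 (f (c (a x)) + g (a x))) := by
    rw [← hasDerivWithinAt_iff_tendsto_slope' (notMem_Ioi.2 le_rfl)]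
    exact (hc_deriv (a x) hat.1).Ioi_of_Ici
  rw [hcat] at T2
  have T3 := (T2.comp T1).inv₀ dpos.ne'
  apply T3.congr'
  filter_upwards [self_mem_nhdsWithin] with z hz
  have hz0 : z ∈ Icc 0 (c T) := hsub2 hz
  have hcaz : c (a z) = z := ha2 z hz0
  show (slope c (a x) (a z))⁻¹ = slope a x z
  rw [slope_def_field, slope_def_field, hcaz, hcat, inv_div]

lemma sol_le {ct : ℝ → ℝ}
    (hg_mono : ∀ s t : ℝ, 0 ≤ s → s ≤ t → g s ≤ g t)
    (hpos : ∀ x ≥ (0:ℝ), ∀ t ≥ (0:ℝ), 0 < f x + g t)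
    (hc_cont : ContinuousOn c (Ici 0)) (hc0 : c 0 = 0)
    (hc_deriv : ∀ t ≥ (0:ℝ), HasDerivWithinAt c (f (c t) + g t) (Ici t) t)
    (hct_cont : ContinuousOn ct (Ici 0)) (hct0 : ct 0 = 0)
    (hct_deriv : ∀ t ≥ (0:ℝ), HasDerivWithinAt ct (f (ct t) + g t) (Ici t) t) :
    ∀ t ≥ (0:ℝ), c t ≤ ct t := by
  intro t1 ht1
  rcases eq_or_lt_of_le ht1 with h0 | ht1pos
  · rw [← h0, hc0, hct0]
  by_contra hlt
  push_neg at hlt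
  obtain ⟨a, ha1, ha2, haleft, hasm, hacont, haderiv⟩ :=
    exists_inverse hpos hc_cont hc0 hc_deriv ht1pos
  obtain ⟨b, hb1, hb2, hbleft, hbsm, hbcont, hbderiv⟩ :=
    exists_inverse hpos hct_cont hct0 hct_deriv ht1pos
  set A := c t1 with hA
  set M := ct t1 with hM
  have hM0 : 0 < M := hct0 ▸ sol_lt hpos hct_cont hct0 hct_deriv 0 t1 le_rfl ht1pos
  have hMA : M < A := hlt
  have hsub : Icc (0:ℝ) M ⊆ Icc 0 A := Icc_subset_Icc le_rfl hMA.le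
  have hsub' : Ico (0:ℝ) M ⊆ Ico 0 A := Ico_subset_Ico le_rfl hMA.le
  have ha0 : a 0 = 0 := by have := haleft 0 ⟨le_rfl, ht1pos.le⟩; rwa [hc0] at this
  have hb0 : b 0 = 0 := by have := hbleft 0 ⟨le_rfl, ht1pos.le⟩; rwa [hct0] at this
  have key : ∀ ε > (0:ℝ), b M - a M ≤ ε + ε * M := by
    intro ε hε
    have hB : ∀ x : ℝ, HasDerivAt (fun y => ε + ε * y) ε x := fun x => by
      simpa using ((hasDerivAt_id x).const_mul ε).const_add ε
    have h := image_le_of_deriv_right_lt_deriv_boundary (a := 0) (b := M)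
      (f := fun x => b x - a x)
      (f' := fun x => (f x + g (b x))⁻¹ - (f x + g (a x))⁻¹)
      (B := fun y => ε + ε * y) (B' := fun _ => ε)
      (hbcont.sub (hacont.mono hsub))
      (fun x hx => (hbderiv x hx).sub (haderiv x (hsub' hx)))
      (by simp [ha0, hb0, hε.le])
      hB
      (by
      intro x hx heq
      have heq' : b x - a x = ε + ε * x := heq
      have hxmemM : x ∈ Icc 0 M := ⟨hx.1, hx.2.le⟩
      have hxmemA : x ∈ Icc 0 A := hsub hxmemM
      have hax0 : 0 ≤ a x := (ha1 x hxmemA).1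
      have hbx0 : 0 ≤ b x := (hb1 x hxmemM).1
      have hab : a x < b x := by
        have : 0 < ε + ε * x := by nlinarith [hx.1]
        linarith [heq']
      have hg' : g (a x) ≤ g (b x) := hg_mono _ _ hax0 hab.le
      have h1 : 0 < f x + g (a x) := hpos x hx.1 (a x) hax0
      have h2 : 0 < f x + g (b x) := hpos x hx.1 (b x) hbx0
      have : (f x + g (b x))⁻¹ ≤ (f x + g (a x))⁻¹ := by
        apply inv_anti₀ h1; linarith
      linarith)
    exact h (right_mem_Icc.2 hM0.le)
  have hbM : b M = t1 := by have := hbleft t1 ⟨ht1pos.le, le_rfl⟩; rwa [← hM] at this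
  have haA : a A = t1 := by have := haleft t1 ⟨ht1pos.le, le_rfl⟩; rwa [← hA] at this
  have hA0 : 0 ≤ A := (hM0.trans hMA).le
  have haM : a M < t1 := by
    have := hasm (hsub (right_mem_Icc.2 hM0.le)) (right_mem_Icc.2 hA0) hMA
    rwa [haA] at this
  set D := b M - a M with hD
  have hDpos : 0 < D := by rw [hD, hbM]; linarith
  have h1M : (0:ℝ) < 1 + M := by linarith
  have hεp : 0 < D / (2 * (1 + M)) := by positivity
  have h2 := key _ hεp
  have h3 : D / (2 * (1 + M)) + D / (2 * (1 + M)) * M = D / 2 := by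
    field_simp
  rw [h3] at h2
  linarith

end Aux

/-- if `f(x) + g(t) > 0` for all `x, t ≥ 0`, then the initial value
problem `c'₊ = f ∘ c + g`, `c(0) = 0`, has at most one solution. -/
theorem uniqueness_positive_rate
    (f fm g gm : ℝ → ℝ)
    (hadm : AdmissiblePair f fm g gm)
    (hpos : ∀ x ≥ (0:ℝ), ∀ t ≥ (0:ℝ), 0 < f x + g t)
    (c ct : ℝ → ℝ)
    (hc_cont : ContinuousOn c (Ici 0)) (hc0 : c 0 = 0)
    (hc_deriv : ∀ t ≥ (0:ℝ), HasDerivWithinAt c (f (c t) + g t) (Ici t) t)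
    (hct_cont : ContinuousOn ct (Ici 0)) (hct0 : ct 0 = 0)
    (hct_deriv : ∀ t ≥ (0:ℝ), HasDerivWithinAt ct (f (ct t) + g t) (Ici t) t) :
    ∀ t ≥ (0:ℝ), c t = ct t := by
  obtain ⟨-, -, -, -, -, hg_mono, -⟩ := hadm
  intro t ht
  exact le_antisymm
    (sol_le hg_mono hpos hc_cont hc0 hc_deriv hct_cont hct0 hct_deriv t ht)
    (sol_le hg_mono hpos hct_cont hct0 hct_deriv hc_cont hc0 hc_deriv t ht)
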